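/- arXiv:2305.18929 — 4 statements merged into one kernel-verified Lean document; each statement's English description precedes it below -/
import Mathlib

section
/- Fix a ∈ R^d, τ > 0, and an initial point v_{-1} ∈ R^d. Define the sequence v_k = v_{k-1} + clip_τ(a − v_{k-1}) for k ≥ 0. Then for all k ≥ 0, ‖v_k − a‖ ≤ max{0, ‖v_{-1} − a‖ − (k+1)τ}. In particular, if k ≥ ⌈‖v_{-1} − a‖/τ − 1⌉ then v_k = a. -/
noncomputable def clip {E : Type*} [NormedAddCommGroup E] [NormedSpace ℝ E]
    (τ : ℝ) (x : E) : E := if ‖x‖ ≤ τ then x else (τ / ‖x‖) • x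

lemma clip_step {E : Type*} [NormedAddCommGroup E] [NormedSpace ℝ E]
    (τ : ℝ) (hτ : 0 < τ) (a x : E) :
    ‖(x + clip τ (a - x)) - a‖ ≤ max 0 (‖x - a‖ - τ) := by
  unfold clip
  split_ifs with h
  · simp
  · push_neg at h
    have hpos : (0:ℝ) < ‖a - x‖ := hτ.trans h
    have hne : ‖a - x‖ ≠ 0 := ne_of_gt hpos
    have key : x + (τ / ‖a - x‖) • (a - x) - a = (τ / ‖a - x‖ - 1) • (a - x) := by
      rw [sub_smul, one_smul]; abel
    rw [key, norm_smul, Real.norm_eq_abs]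
    have hlt : τ / ‖a - x‖ < 1 := (div_lt_one hpos).2 h
    rw [abs_of_nonpos (by linarith)]
    have : -(τ / ‖a - x‖ - 1) * ‖a - x‖ = ‖a - x‖ - τ := by
      field_simp
      ring
    rw [this, norm_sub_rev x a]
    exact le_max_right _ _

theorem clip21_avg_single {d : ℕ} (τ : ℝ) (hτ : 0 < τ)
    (a vinit : EuclideanSpace ℝ (Fin d)) (v : ℕ → EuclideanSpace ℝ (Fin d))
    (h0 : v 0 = vinit + clip τ (a - vinit))
    (hrec : ∀ k : ℕ, v (k + 1) = v k + clip τ (a - v k)) :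
    (∀ k : ℕ, ‖v k - a‖ ≤ max 0 (‖vinit - a‖ - (k + 1) * τ)) ∧
    (∀ k : ℕ, (⌈‖vinit - a‖ / τ - 1⌉ : ℤ) ≤ (k : ℤ) → v k = a) := by
  have main : ∀ k : ℕ, ‖v k - a‖ ≤ max 0 (‖vinit - a‖ - (k + 1) * τ) := by
    intro k
    induction k with
    | zero =>
      rw [h0]
      have := clip_step τ hτ a vinit
      refine this.trans ?_
      apply max_le_max le_rfl
      push_cast; linarith
    | succ n ih =>
      rw [hrec n]
      refine (clip_step τ hτ a (v n)).trans ?_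
      rcases le_or_gt (‖v n - a‖) 0 with h1 | h1
      · apply max_le (le_max_left _ _)
        refine le_trans (by linarith) (le_max_left _ _)
      · apply max_le (le_max_left _ _)
        have h2 : ‖v n - a‖ - τ ≤ max 0 (‖vinit - a‖ - (n + 1) * τ) - τ := by linarith
        refine h2.trans ?_
        rcases max_cases (0:ℝ) (‖vinit - a‖ - (n + 1) * τ) with ⟨he, _⟩ | ⟨he, _⟩ <;>
          rw [he] <;> [exact le_trans (by linarith) (le_max_left _ _);
            refine le_trans (le_of_eq (by push_cast; ring)) (le_max_right _ _)]
  refine ⟨main, fun k hk => ?_⟩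
  have h1 : ‖vinit - a‖ / τ - 1 ≤ (k : ℝ) := by
    have := Int.ceil_le.1 hk
    exact_mod_cast this
  have h2 : ‖vinit - a‖ - (k + 1) * τ ≤ 0 := by
    have := (div_le_iff₀ hτ).1 (by linarith : ‖vinit - a‖ / τ ≤ (k : ℝ) + 1)
    linarith
  have h3 : ‖v k - a‖ ≤ 0 := (main k).trans (by simp [h2])
  have : v k - a = 0 := norm_le_zero_iff.1 h3
  exact sub_eq_zero.1 this
end

section
/- Consider single-node Clip21-GD: x_{k+1} = x_k − γv_k, v_k = v_{k-1} + clip_τ(∇f(x_k) − v_{k-1}), where f has L-Lipschitz gradient. Then for every k ≥ 0, ‖∇f(x_{k+1}) − v_k‖ ≤ max{0, ‖∇f(x_k) − v_{k-1}‖ − τ} + Lγ‖v_k‖. -/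
lemma clip_residual {E : Type*} [NormedAddCommGroup E] [NormedSpace ℝ E]
    (τ : ℝ) (hτ : 0 < τ) (u : E) : ‖u - clip τ u‖ ≤ max 0 (‖u‖ - τ) := by
  unfold clip
  split_ifs with h
  · simp
  · push_neg at h
    have hu : 0 < ‖u‖ := lt_trans hτ h
    have : u - (τ / ‖u‖) • u = (1 - τ / ‖u‖) • u := by
      rw [sub_smul, one_smul]
    rw [this, norm_smul]
    have h1 : (0:ℝ) ≤ 1 - τ / ‖u‖ := by
      rw [sub_nonneg, div_le_one hu]; exact h.le
    rw [Real.norm_eq_abs, abs_of_nonneg h1]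
    have : (1 - τ / ‖u‖) * ‖u‖ = ‖u‖ - τ := by
      field_simp
    rw [this]
    exact le_max_right _ _

/-- Single-node Clip21-GD: here `v k` denotes the paper's `v_{k-1}`, so
`v (k+1)` is the paper's `v_k` and `x (k+1) = x k - γ • v (k+1)`. -/
theorem clip21_gd_recursion_bound {d : ℕ} (τ L γ : ℝ) (hτ : 0 < τ)
    (hL : 0 < L) (hγ : 0 < γ)
    (f : EuclideanSpace ℝ (Fin d) → ℝ)
    (hdiff : Differentiable ℝ f)
    (hlip : ∀ x y, ‖gradient f x - gradient f y‖ ≤ L * ‖x - y‖)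
    (x v : ℕ → EuclideanSpace ℝ (Fin d))
    (hv : ∀ k : ℕ, v (k + 1) = v k + clip τ (gradient f (x k) - v k))
    (hx : ∀ k : ℕ, x (k + 1) = x k - γ • v (k + 1)) :
    ∀ k : ℕ, ‖gradient f (x (k + 1)) - v (k + 1)‖ ≤
      max 0 (‖gradient f (x k) - v k‖ - τ) + L * γ * ‖v (k + 1)‖ := by
  intro k
  set g := gradient f
  have hsplit : g (x (k+1)) - v (k+1) =
      (g (x k) - v (k+1)) + (g (x (k+1)) - g (x k)) := by abel
  have h1 : ‖g (x k) - v (k+1)‖ ≤ max 0 (‖g (x k) - v k‖ - τ) := by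
    have : g (x k) - v (k+1) = (g (x k) - v k) - clip τ (g (x k) - v k) := by
      rw [hv k]; abel
    rw [this]
    exact clip_residual τ hτ _
  have h2 : ‖g (x (k+1)) - g (x k)‖ ≤ L * γ * ‖v (k+1)‖ := by
    have := hlip (x (k+1)) (x k)
    rw [hx k] at this ⊢
    calc ‖g (x k - γ • v (k+1)) - g (x k)‖ ≤ L * ‖x k - γ • v (k+1) - x k‖ := this
      _ = L * γ * ‖v (k+1)‖ := by
          rw [sub_sub_cancel_left, norm_neg, norm_smul, Real.norm_eq_abs,
            abs_of_pos hγ, mul_assoc]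
  calc ‖g (x (k+1)) - v (k+1)‖ ≤ ‖g (x k) - v (k+1)‖ + ‖g (x (k+1)) - g (x k)‖ := by
        rw [hsplit]; exact norm_add_le _ _
    _ ≤ max 0 (‖g (x k) - v k‖ - τ) + L * γ * ‖v (k+1)‖ := add_le_add h1 h2
end

section
/- Fix k ≥ 1 and consider single-node Clip21-GD with the representation v_k = (1−η_k)v_{k-1} + η_k∇f(x_k), η_k ∈ [0,1], x_k = x_{k-1} − γv_{k-1}, where f has L-Lipschitz gradient. Suppose (γ/2)‖∇f(x_{k-1})‖² ≤ φ₀, (γ/4)‖v_{k-1}‖² ≤ φ₀, and γ ≤ (1 − 1/√2)/L for some φ₀ ≥ 0. Then ‖v_k‖ ≤ √(4φ₀/γ). -/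
theorem clip21_gd_v_bound {d : ℕ} (L γ φ₀ : ℝ) (hL : 0 < L) (hγ : 0 < γ)
    (hφ₀ : 0 ≤ φ₀)
    (f : EuclideanSpace ℝ (Fin d) → ℝ)
    (hdiff : Differentiable ℝ f)
    (hlip : ∀ x y, ‖gradient f x - gradient f y‖ ≤ L * ‖x - y‖)
    (ηk : ℝ) (hηk0 : 0 ≤ ηk) (hηk1 : ηk ≤ 1)
    (xkm1 vkm1 xk vk : EuclideanSpace ℝ (Fin d))
    (hxk : xk = xkm1 - γ • vkm1)
    (hvk : vk = (1 - ηk) • vkm1 + ηk • gradient f xk)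
    (hgrad : γ / 2 * ‖gradient f xkm1‖ ^ 2 ≤ φ₀)
    (hvprev : γ / 4 * ‖vkm1‖ ^ 2 ≤ φ₀)
    (hγle : γ ≤ (1 - 1 / Real.sqrt 2) / L) :
    ‖vk‖ ≤ Real.sqrt (4 * φ₀ / γ) := by
  set B := Real.sqrt (4 * φ₀ / γ) with hBdef
  have hs2 : (1:ℝ) < Real.sqrt 2 := by
    have := Real.lt_sqrt (x := 2) (y := 1) (by norm_num)
    nlinarith [Real.sq_sqrt (by norm_num : (2:ℝ) ≥ 0), Real.sqrt_nonneg 2,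
      Real.sqrt_lt_sqrt (by norm_num : (0:ℝ) ≤ 1) (by norm_num : (1:ℝ) < 2),
      Real.sqrt_one]
  have hs2pos : (0:ℝ) < Real.sqrt 2 := by linarith
  have hB0 : 0 ≤ B := Real.sqrt_nonneg _
  have hv1 : ‖vkm1‖ ≤ B := by
    have h1 : ‖vkm1‖ ^ 2 ≤ 4 * φ₀ / γ := by
      rw [le_div_iff₀ hγ]; nlinarith
    calc ‖vkm1‖ = Real.sqrt (‖vkm1‖ ^ 2) := (Real.sqrt_sq (norm_nonneg _)).symm
      _ ≤ B := Real.sqrt_le_sqrt h1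
  have hg1 : ‖gradient f xkm1‖ ≤ Real.sqrt (2 * φ₀ / γ) := by
    have h1 : ‖gradient f xkm1‖ ^ 2 ≤ 2 * φ₀ / γ := by
      rw [le_div_iff₀ hγ]; nlinarith
    calc ‖gradient f xkm1‖ = Real.sqrt (‖gradient f xkm1‖ ^ 2) :=
          (Real.sqrt_sq (norm_nonneg _)).symm
      _ ≤ _ := Real.sqrt_le_sqrt h1
  have hsqeq : Real.sqrt (2 * φ₀ / γ) = B / Real.sqrt 2 := by
    rw [hBdef, ← Real.sqrt_div (by positivity)]
    congr 1
    field_simp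
    ring
  have hLγ : L * γ ≤ 1 - 1 / Real.sqrt 2 := by
    have := mul_le_mul_of_nonneg_left hγle hL.le
    rwa [mul_div_cancel₀ _ hL.ne'] at this
  have hxdiff : ‖xk - xkm1‖ = γ * ‖vkm1‖ := by
    rw [hxk]
    have : xkm1 - γ • vkm1 - xkm1 = -(γ • vkm1) := by abel
    rw [this, norm_neg, norm_smul, Real.norm_eq_abs, abs_of_pos hγ]
  have hgk : ‖gradient f xk‖ ≤ B := by
    have htri : ‖gradient f xk‖ ≤ ‖gradient f xkm1‖ + ‖gradient f xk - gradient f xkm1‖ := by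
      have := norm_add_le (gradient f xkm1) (gradient f xk - gradient f xkm1)
      simpa using this
    have hlip' := hlip xk xkm1
    rw [hxdiff] at hlip'
    have h2 : ‖gradient f xk‖ ≤ B / Real.sqrt 2 + L * (γ * ‖vkm1‖) := by
      calc ‖gradient f xk‖ ≤ ‖gradient f xkm1‖ + ‖gradient f xk - gradient f xkm1‖ := htri
        _ ≤ B / Real.sqrt 2 + L * (γ * ‖vkm1‖) := by
            rw [← hsqeq]; exact add_le_add hg1 hlip'
    have h3 : L * (γ * ‖vkm1‖) ≤ (1 - 1 / Real.sqrt 2) * B := by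
      rw [← mul_assoc]
      have h4 : (0:ℝ) ≤ 1 - 1 / Real.sqrt 2 := by
        have : 1 / Real.sqrt 2 < 1 := by
          rw [div_lt_one hs2pos]; exact hs2
        linarith
      exact mul_le_mul hLγ hv1 (norm_nonneg _) h4
    have : B / Real.sqrt 2 + (1 - 1 / Real.sqrt 2) * B = B := by
      field_simp
      ring
    linarith
  rw [hvk]
  calc ‖(1 - ηk) • vkm1 + ηk • gradient f xk‖
      ≤ ‖(1 - ηk) • vkm1‖ + ‖ηk • gradient f xk‖ := norm_add_le _ _
    _ = (1 - ηk) * ‖vkm1‖ + ηk * ‖gradient f xk‖ := by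
        rw [norm_smul, norm_smul, Real.norm_eq_abs, Real.norm_eq_abs,
          abs_of_nonneg (by linarith), abs_of_nonneg hηk0]
    _ ≤ (1 - ηk) * B + ηk * B := by
        apply add_le_add
        · exact mul_le_mul_of_nonneg_left hv1 (by linarith)
        · exact mul_le_mul_of_nonneg_left hgk hηk0
    _ = B := by ring
end

section
/- Let η ∈ (0,1], f have L-Lipschitz gradient, and let v_{k+1} = (1−η_{k+1})v_k + η_{k+1}∇f(x_{k+1}) with η_{k+1} ≥ η. Then ‖∇f(x_{k+1}) − v_{k+1}‖² ≤ (1−η)(1−η/2)·‖∇f(x_k) − v_k‖² + (1 + 2/η)(1−η)²L²·‖x_{k+1} − x_k‖². -/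
private lemma clip21_aux (η ηk1 L a b c g : ℝ) (hη0 : 0 < η) (hη1 : η ≤ 1)
    (hηk1 : η ≤ ηk1) (hηk1' : ηk1 ≤ 1) (hL : 0 ≤ L)
    (han : 0 ≤ a) (hbn : 0 ≤ b) (hcn : 0 ≤ c) (hgn : 0 ≤ g)
    (h5 : g ≤ a + b) (h4 : b ≤ L * c) :
    ((1 - ηk1) * g) ^ 2 ≤
      (1 - η) * (1 - η / 2) * a ^ 2 + (1 + 2 / η) * (1 - η) ^ 2 * L ^ 2 * c ^ 2 := by
  have key : ((1 - ηk1) * g) ^ 2 ≤ (1 - η) ^ 2 * (a + b) ^ 2 := by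
    have h6 : (1 - ηk1) * g ≤ (1 - η) * (a + b) :=
      mul_le_mul (by linarith) h5 hgn (by linarith)
    nlinarith [mul_nonneg (sub_nonneg.2 hηk1') hgn]
  have young : (a + b) ^ 2 ≤ (1 + η / 2) * a ^ 2 + (1 + 2 / η) * b ^ 2 := by
    have heq : (1 + η / 2) * a ^ 2 + (1 + 2 / η) * b ^ 2 - (a + b) ^ 2
        = (η * a - 2 * b) ^ 2 / (2 * η) := by
      field_simp; ring
    nlinarith [div_nonneg (sq_nonneg (η * a - 2 * b)) (by linarith : (0:ℝ) ≤ 2 * η)]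
  have hfac : (1 - η) ^ 2 * (1 + η / 2) ≤ (1 - η) * (1 - η / 2) := by
    nlinarith [mul_nonneg (sub_nonneg.2 hη1) (sq_nonneg η)]
  have hb2 : b ^ 2 ≤ L ^ 2 * c ^ 2 := by nlinarith [mul_nonneg hL hcn]
  have h2η : (0:ℝ) ≤ 1 + 2 / η := by positivity
  calc ((1 - ηk1) * g) ^ 2 ≤ (1 - η) ^ 2 * (a + b) ^ 2 := key
    _ ≤ (1 - η) ^ 2 * ((1 + η / 2) * a ^ 2 + (1 + 2 / η) * b ^ 2) := by
        nlinarith [sq_nonneg (1 - η)]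
    _ ≤ _ := by
        nlinarith [sq_nonneg a, mul_nonneg h2η (sq_nonneg (1 - η))]

theorem clip21_gd_contraction {d : ℕ} (L η ηk1 : ℝ) (hL : 0 < L)
    (hη0 : 0 < η) (hη1 : η ≤ 1) (hηk1 : η ≤ ηk1) (hηk1' : ηk1 ≤ 1)
    (f : EuclideanSpace ℝ (Fin d) → ℝ)
    (hdiff : Differentiable ℝ f)
    (hlip : ∀ x y, ‖gradient f x - gradient f y‖ ≤ L * ‖x - y‖)
    (xk xk1 vk vk1 : EuclideanSpace ℝ (Fin d))
    (hvk1 : vk1 = (1 - ηk1) • vk + ηk1 • gradient f xk1) :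
    ‖gradient f xk1 - vk1‖ ^ 2 ≤
      (1 - η) * (1 - η / 2) * ‖gradient f xk - vk‖ ^ 2
      + (1 + 2 / η) * (1 - η) ^ 2 * L ^ 2 * ‖xk1 - xk‖ ^ 2 := by
  have h1 : gradient f xk1 - vk1 = (1 - ηk1) • (gradient f xk1 - vk) := by
    rw [hvk1]; module
  have h2 : ‖gradient f xk1 - vk1‖ = (1 - ηk1) * ‖gradient f xk1 - vk‖ := by
    rw [h1, norm_smul, Real.norm_eq_abs, abs_of_nonneg (by linarith)]
  have h5 : ‖gradient f xk1 - vk‖ ≤ ‖gradient f xk - vk‖ + ‖gradient f xk1 - gradient f xk‖ := by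
    have h : gradient f xk1 - vk = (gradient f xk - vk) + (gradient f xk1 - gradient f xk) := by
      abel
    rw [h]; exact norm_add_le _ _
  rw [h2]
  exact clip21_aux η ηk1 L _ _ _ _ hη0 hη1 hηk1 hηk1' hL.le
    (norm_nonneg _) (norm_nonneg _) (norm_nonneg _) (norm_nonneg _) h5 (hlip xk1 xk)
end
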